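/- Let s < t be real numbers and let agents i = 1,…,k have positions p_i ∈ ℝ and budgets B_i ≥ 0. Define l_i = p_i − B_i/2 and r_i = p_i + B_i/2. Then there exist closed intervals I_i, each of length at most B_i/2 and with I_i ⊆ [l_i, r_i], whose union covers [s,t], if and only if the returning budgeted delivery problem on the line is solvable, i.e., there is a finite sequence of agents where each carries the message over an interval of total walking length (from p_i to pickup, to drop-off, back to p_i) at most B_i and the carried intervals cover [s,t] in order from s to t. -/

import Mathlib

private lemma cost_of_sub (p B x y a b : ℝ) (hxy : x ≤ y) (hax : a ≤ x) (hyb : y ≤ b)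
    (hlen : b - a ≤ B / 2) (hl : p - B / 2 ≤ a) (hr : b ≤ p + B / 2) :
    |p - x| + (y - x) + |y - p| ≤ B := by
  rcases abs_cases (p - x) with ⟨h1, h2⟩ | ⟨h1, h2⟩ <;>
    rcases abs_cases (y - p) with ⟨h3, h4⟩ | ⟨h3, h4⟩ <;> linarith

private lemma carry_bounds (p B x y : ℝ) (hxy : x ≤ y)
    (hc : |p - x| + (y - x) + |y - p| ≤ B) :
    y - x ≤ B / 2 ∧ p - B / 2 ≤ x ∧ y ≤ p + B / 2 := by
  rcases abs_cases (p - x) with ⟨h1, h2⟩ | ⟨h1, h2⟩ <;>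
    rcases abs_cases (y - p) with ⟨h3, h4⟩ | ⟨h3, h4⟩ <;>
      exact ⟨by linarith, by linarith, by linarith⟩

private lemma find_step (m : ℕ) (c : Fin (m + 2) → ℝ)
    (hmono : ∀ j : Fin (m + 1), c j.castSucc ≤ c j.succ) (z : ℝ)
    (h0 : c 0 ≤ z) (hl : z ≤ c (Fin.last (m + 1))) :
    ∃ j : Fin (m + 1), c j.castSucc ≤ z ∧ z ≤ c j.succ := by
  have hmon : Monotone c := Fin.monotone_iff_le_succ.mpr hmono
  set M : Finset (Fin (m + 2)) := Finset.univ.filter (fun j => c j ≤ z) with hM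
  have hM0 : (0 : Fin (m + 2)) ∈ M := by simp [hM, h0]
  have hMne : M.Nonempty := ⟨0, hM0⟩
  set j' : Fin (m + 2) := M.max' hMne with hj'
  have hj'M : j' ∈ M := M.max'_mem hMne
  have hj'z : c j' ≤ z := by simpa [hM] using hj'M
  by_cases hlast : j' = Fin.last (m + 1)
  · refine ⟨Fin.last m, ?_, ?_⟩
    · exact le_trans (hmon (Fin.le_last _)) (by rw [← hlast]; exact hj'z)
    · rw [Fin.succ_last]; exact hl
  · obtain ⟨j, hj⟩ := Fin.exists_castSucc_eq.mpr hlast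
    refine ⟨j, by rw [hj]; exact hj'z, ?_⟩
    by_contra hcon
    push_neg at hcon
    have : j.succ ∈ M := by simp [hM, hcon.le]
    have hle : j.succ ≤ j' := Finset.le_max' M _ this
    rw [← hj] at hle
    exact absurd hle (not_le.mpr (Fin.castSucc_lt_succ (i := j)))

private lemma chain_aux (k : ℕ) (a b : Fin k → ℝ) (t : ℝ) :
    ∀ n (S : Finset (Fin k)), S.card ≤ n → ∀ s : ℝ, s ≤ t →
      Set.Icc s t ⊆ ⋃ i ∈ S, Set.Icc (a i) (b i) →
      ∃ (ℓ : ℕ) (g : Fin ℓ → Fin k) (c : Fin (ℓ + 1) → ℝ),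
        Function.Injective g ∧ (∀ j, g j ∈ S) ∧ c 0 = s ∧ c (Fin.last ℓ) = t ∧
        (∀ j : Fin ℓ, c j.castSucc ≤ c j.succ) ∧
        (∀ j : Fin ℓ, a (g j) ≤ c j.castSucc ∧ c j.succ ≤ b (g j)) := by
  intro n
  induction n with
  | zero =>
    intro S hS s hst hcov
    rcases eq_or_lt_of_le hst with rfl | hlt
    · exact ⟨0, Fin.elim0, fun _ => s, fun x => x.elim0, fun j => j.elim0, rfl, rfl,
        fun j => j.elim0, fun j => j.elim0⟩
    · exfalso
      have hs : s ∈ Set.Icc s t := ⟨le_refl s, hst⟩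
      have := hcov hs
      rw [Set.mem_iUnion₂] at this
      obtain ⟨i, hiS, _⟩ := this
      have : S = ∅ := Finset.card_eq_zero.mp (Nat.le_zero.mp hS)
      simp [this] at hiS
  | succ n ih =>
    intro S hS s hst hcov
    rcases eq_or_lt_of_le hst with rfl | hlt
    · exact ⟨0, Fin.elim0, fun _ => s, fun x => x.elim0, fun j => j.elim0, rfl, rfl,
        fun j => j.elim0, fun j => j.elim0⟩
    have hs : s ∈ Set.Icc s t := ⟨le_refl s, hst⟩
    have hsc := hcov hs
    rw [Set.mem_iUnion₂] at hsc
    obtain ⟨i, hiS, hais, hsbi⟩ := hsc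
    by_cases hbt : t ≤ b i
    · -- one agent suffices
      refine ⟨1, fun _ => i, ![s, t], fun x y _ => Subsingleton.elim x y,
        fun _ => hiS, rfl, rfl, ?_, ?_⟩
      · intro j
        have : j = 0 := Subsingleton.elim j 0
        subst this
        show (![s, t] : Fin 2 → ℝ) 0 ≤ ![s, t] 1
        simpa using hst
      · intro j
        have : j = 0 := Subsingleton.elim j 0
        subst this
        exact ⟨hais, hbt⟩
    push_neg at hbt
    -- find an agent i' ≠ i covering the handover point b i
    have hbist : b i ∈ Set.Icc s t := ⟨hsbi, hbt.le⟩
    have key : ∃ i', i' ∈ S.erase i ∧ a i' ≤ b i ∧ b i ≤ b i' := by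
      set U : Finset (Fin k) := (S.erase i).filter (fun i' => b i < a i') with hU
      set m : ℝ := if h : U.Nonempty then min t (U.inf' h a) else t with hm
      have hbm : b i < m := by
        rw [hm]
        split
        · rename_i h
          refine lt_min hbt ?_
          rw [Finset.lt_inf'_iff]
          intro i' hi'
          exact (Finset.mem_filter.mp hi').2
        · exact hbt
      have hmt : m ≤ t := by
        rw [hm]; split
        · exact min_le_left _ _
        · exact le_refl t
      set z : ℝ := (b i + m) / 2 with hz
      have hz1 : b i < z := by rw [hz]; linarith
      have hz2 : z < m := by rw [hz]; linarith
      have hzIcc : z ∈ Set.Icc s t := ⟨le_trans hsbi hz1.le, le_trans hz2.le hmt⟩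
      have := hcov hzIcc
      rw [Set.mem_iUnion₂] at this
      obtain ⟨i'', hi''S, haz, hzb⟩ := this
      have hne : i'' ≠ i := by
        intro h; subst h; exact absurd hzb (not_le.mpr hz1)
      have hnotU : i'' ∉ U := by
        intro hU'
        have : m ≤ a i'' := by
          rw [hm]
          have hUne : U.Nonempty := ⟨i'', hU'⟩
          rw [dif_pos hUne]
          exact le_trans (min_le_right _ _) (Finset.inf'_le a hU')
        linarith
      have hi''e : i'' ∈ S.erase i := Finset.mem_erase.mpr ⟨hne, hi''S⟩
      refine ⟨i'', hi''e, ?_, le_trans hz1.le hzb⟩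
      by_contra hcon
      push_neg at hcon
      exact hnotU (Finset.mem_filter.mpr ⟨hi''e, hcon⟩)
    obtain ⟨i', hi'e, hai', hbi'⟩ := key
    -- recurse on S.erase i from b i
    have hcard : (S.erase i).card ≤ n := by
      have h1 : 1 ≤ S.card := Finset.card_pos.mpr ⟨i, hiS⟩
      rw [Finset.card_erase_of_mem hiS]
      omega
    have hcov' : Set.Icc (b i) t ⊆ ⋃ j ∈ S.erase i, Set.Icc (a j) (b j) := by
      intro z hzm
      rcases eq_or_lt_of_le hzm.1 with rfl | hlt'
      · rw [Set.mem_iUnion₂]; exact ⟨i', hi'e, hai', hbi'⟩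
      · have := hcov ⟨le_trans hsbi hlt'.le, hzm.2⟩
        rw [Set.mem_iUnion₂] at this ⊢
        obtain ⟨i'', hi''S, ha'', hb''⟩ := this
        have : i'' ≠ i := by intro h; subst h; exact absurd hb'' (not_le.mpr hlt')
        exact ⟨i'', Finset.mem_erase.mpr ⟨this, hi''S⟩, ha'', hb''⟩
    obtain ⟨ℓ, g, c, hgi, hgS, hc0, hcl, hmono, hbnd⟩ :=
      ih (S.erase i) hcard (b i) hbt.le hcov'
    refine ⟨ℓ + 1, Fin.cases i g, Fin.cases s c, ?_, ?_, ?_, ?_, ?_, ?_⟩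
    · intro x y hxy
      induction x using Fin.cases with
      | zero =>
        induction y using Fin.cases with
        | zero => rfl
        | succ y =>
          exfalso
          simp only [Fin.cases_zero, Fin.cases_succ] at hxy
          exact (Finset.mem_erase.mp (hgS y)).1 hxy.symm
      | succ x =>
        induction y using Fin.cases with
        | zero =>
          exfalso
          simp only [Fin.cases_zero, Fin.cases_succ] at hxy
          exact (Finset.mem_erase.mp (hgS x)).1 hxy
        | succ y =>
          simp only [Fin.cases_succ] at hxy
          rw [hgi hxy]
    · intro j
      induction j using Fin.cases with
      | zero => simpa using hiS
      | succ j => simp only [Fin.cases_succ]; exact Finset.mem_of_mem_erase (hgS j)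
    · rfl
    · rw [← Fin.succ_last]; simp only [Fin.cases_succ]; exact hcl
    · intro j
      induction j using Fin.cases with
      | zero =>
        simp only [Fin.castSucc_zero, Fin.cases_zero, Fin.cases_succ, hc0]
        exact hsbi
      | succ j =>
        rw [← Fin.succ_castSucc]
        simp only [Fin.cases_succ]
        exact hmono j
    · intro j
      induction j using Fin.cases with
      | zero =>
        simp only [Fin.castSucc_zero, Fin.cases_zero, Fin.cases_succ, hc0]
        exact ⟨hais, le_refl _⟩
      | succ j =>
        rw [← Fin.succ_castSucc]
        simp only [Fin.cases_succ]
        exact hbnd j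

theorem returning_delivery_line_iff_cover
    (k : ℕ) (s t : ℝ) (hst : s < t) (p B : Fin k → ℝ) (hB : ∀ i, 0 ≤ B i) :
    (∃ a b : Fin k → ℝ,
        (∀ i, a i ≤ b i) ∧
        (∀ i, b i - a i ≤ B i / 2) ∧
        (∀ i, Set.Icc (a i) (b i) ⊆ Set.Icc (p i - B i / 2) (p i + B i / 2)) ∧
        Set.Icc s t ⊆ ⋃ i, Set.Icc (a i) (b i))
    ↔
    (∃ (ℓ : ℕ) (g : Fin ℓ → Fin k) (c : Fin (ℓ + 1) → ℝ),
        Function.Injective g ∧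
        c 0 = s ∧ c (Fin.last ℓ) = t ∧
        (∀ j : Fin ℓ, c j.castSucc ≤ c j.succ) ∧
        (∀ j : Fin ℓ,
          |p (g j) - c j.castSucc| + (c j.succ - c j.castSucc) + |c j.succ - p (g j)|
            ≤ B (g j))) := by
  constructor
  · rintro ⟨a, b, hab, hlen, hsub, hcov⟩
    have hcov' : Set.Icc s t ⊆ ⋃ i ∈ (Finset.univ : Finset (Fin k)), Set.Icc (a i) (b i) := by
      intro z hz
      have := hcov hz
      rw [Set.mem_iUnion] at this
      obtain ⟨i, hi⟩ := this
      rw [Set.mem_iUnion₂]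
      exact ⟨i, Finset.mem_univ i, hi⟩
    obtain ⟨ℓ, g, c, hgi, _, hc0, hcl, hmono, hbnd⟩ :=
      chain_aux k a b t Finset.univ.card Finset.univ le_rfl s hst.le hcov'
    refine ⟨ℓ, g, c, hgi, hc0, hcl, hmono, fun j => ?_⟩
    have h1 := (hbnd j).1
    have h2 := (hbnd j).2
    have hl' : p (g j) - B (g j) / 2 ≤ a (g j) :=
      (hsub (g j) ⟨le_refl _, hab (g j)⟩).1
    have hr' : b (g j) ≤ p (g j) + B (g j) / 2 :=
      (hsub (g j) ⟨hab (g j), le_refl _⟩).2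
    exact cost_of_sub _ _ _ _ _ _ (hmono j) h1 h2 (hlen (g j)) hl' hr'
  · rintro ⟨ℓ, g, c, hgi, hc0, hcl, hmono, hbnd⟩
    classical
    refine ⟨fun i => if h : ∃ j, g j = i then c (h.choose).castSucc else p i,
      fun i => if h : ∃ j, g j = i then c (h.choose).succ else p i, ?_, ?_, ?_, ?_⟩
    · intro i
      by_cases h : ∃ j, g j = i
      · simp only [dif_pos h]; exact hmono _
      · simp only [dif_neg h]; exact le_refl _
    · intro i
      by_cases h : ∃ j, g j = i
      · simp only [dif_pos h]
        have := carry_bounds (p (g h.choose)) (B (g h.choose)) _ _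
          (hmono h.choose) (hbnd h.choose)
        rw [h.choose_spec] at this
        exact this.1
      · simp only [dif_neg h]; linarith [hB i]
    · intro i
      by_cases h : ∃ j, g j = i
      · simp only [dif_pos h]
        have := carry_bounds (p (g h.choose)) (B (g h.choose)) _ _
          (hmono h.choose) (hbnd h.choose)
        rw [h.choose_spec] at this
        exact Set.Icc_subset_Icc this.2.1 this.2.2
      · simp only [dif_neg h]
        intro z hz
        exact ⟨by linarith [hB i, hz.1], by linarith [hB i, hz.2]⟩
    · intro z hz
      have hl0 : ℓ ≠ 0 := by
        intro h; subst h
        rw [Fin.last_zero] at hcl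
        rw [show (0 : Fin 1) = Fin.last 0 by rfl] at hc0
        exact absurd (hc0 ▸ hcl ▸ hst) (lt_irrefl _)
      obtain ⟨m, rfl⟩ : ∃ m, ℓ = m + 1 := ⟨ℓ - 1, by omega⟩
      obtain ⟨j, hj1, hj2⟩ := find_step m c hmono z (hc0 ▸ hz.1) (hcl ▸ hz.2)
      rw [Set.mem_iUnion]
      refine ⟨g j, ?_, ?_⟩
      · have h : ∃ j', g j' = g j := ⟨j, rfl⟩
        simp only [dif_pos h]
        rw [hgi h.choose_spec]
        exact hj1
      · have h : ∃ j', g j' = g j := ⟨j, rfl⟩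
        simp only [dif_pos h]
        rw [hgi h.choose_spec]
        exact hj2
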